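/- arXiv:1012.2068 — 5 statements merged into one kernel-verified Lean document; each statement's English description precedes it below -/
import Mathlib

section
/- Let q ≥ 3 and n ≥ 3 be integers. Then there is no positive integer d such that both d·(q² − q + 1) ≥ qⁿ + 1 and d·((q² − 1)(qⁿ + 1) − (q³ + 1)) ≤ (qⁿ − 2)(qⁿ + 1). -/
/-- Arithmetic core of Theorem 1.1: for `q ≥ 3`, `n ≥ 3`, there is no positive
integer `d` with `d·(q² − q + 1) ≥ qⁿ + 1` and
`d·((q² − 1)(qⁿ + 1) − (q³ + 1)) ≤ (qⁿ − 2)(qⁿ + 1)`. -/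
theorem no_galois_degree_GGK (q : ℤ) (n : ℕ) (hq : 3 ≤ q) (hn : 3 ≤ n) :
    ¬ ∃ d : ℤ, 0 < d ∧ q ^ n + 1 ≤ d * (q ^ 2 - q + 1) ∧
      d * ((q ^ 2 - 1) * (q ^ n + 1) - (q ^ 3 + 1)) ≤ (q ^ n - 2) * (q ^ n + 1) := by
  rintro ⟨d, hd, h1, h2⟩
  have hq1 : (1 : ℤ) ≤ q := by linarith
  have h3n : q ^ 3 ≤ q ^ n := pow_le_pow_right₀ hq1 hn
  have hq3 : (27 : ℤ) ≤ q ^ 3 := by nlinarith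
  -- A ≥ 0
  have hA : (0 : ℤ) ≤ (q ^ 2 - 1) * (q ^ n + 1) - (q ^ 3 + 1) := by
    nlinarith [mul_le_mul_of_nonneg_left (show q ^ 3 + 1 ≤ q ^ n + 1 by linarith)
      (show (0:ℤ) ≤ q ^ 2 - 1 by nlinarith),
      mul_nonneg (show (0:ℤ) ≤ q ^ 2 - 2 by nlinarith) (show (0:ℤ) ≤ q ^ 3 + 1 by linarith)]
  have key : (q ^ n + 1) * ((q ^ 2 - 1) * (q ^ n + 1) - (q ^ 3 + 1)) ≤
      (q ^ 2 - q + 1) * ((q ^ n - 2) * (q ^ n + 1)) := by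
    calc (q ^ n + 1) * ((q ^ 2 - 1) * (q ^ n + 1) - (q ^ 3 + 1))
        ≤ (d * (q ^ 2 - q + 1)) * ((q ^ 2 - 1) * (q ^ n + 1) - (q ^ 3 + 1)) :=
          mul_le_mul_of_nonneg_right h1 hA
      _ = (q ^ 2 - q + 1) * (d * ((q ^ 2 - 1) * (q ^ n + 1) - (q ^ 3 + 1))) := by ring
      _ ≤ (q ^ 2 - q + 1) * ((q ^ n - 2) * (q ^ n + 1)) := by
          apply mul_le_mul_of_nonneg_left h2; nlinarith
  nlinarith [sq_nonneg q, sq_nonneg (q^n), mul_pos (by nlinarith : (0:ℤ) < q^n + 1) (by nlinarith : (0:ℤ) < (q-2) * (q^n - q^2 + q))]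
end

section
/- Let m, A, B, k, d be integers with m ≥ 2, A ≥ 0, 1 ≤ B ≤ m + 1, A(m + 1) − B ≥ −2, k ≥ 0, k(A + 1) < B, B ≠ A + 2, and d ≥ 1. Set N_Y = (m + 1)² + (A(m + 1) − B)·m. If m³ + 1 ≤ d·N_Y, then d(A + 1) ≥ m + k. In particular, if B > A + 2 then d(A + 1) ≥ m + 1. -/
/-- Key arithmetic estimate: `d(A+1) ≥ m + k` under the hypotheses of Lemma 2.1. -/
lemma key_cov (m A B k d : ℤ) (hm : 2 ≤ m) (hA : 0 ≤ A)
    (hB1 : 1 ≤ B) (hB2 : B ≤ m + 1) (hgenus : -2 ≤ A * (m + 1) - B)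
    (hk : 0 ≤ k) (hkB : k * (A + 1) < B) (hBA : B ≠ A + 2) (hd : 1 ≤ d)
    (hcount : m ^ 3 + 1 ≤ d * ((m + 1) ^ 2 + (A * (m + 1) - B) * m)) :
    m + k ≤ d * (A + 1) := by
  have hN : 0 < (m + 1) ^ 2 + (A * (m + 1) - B) * m := by nlinarith
  have hD : (m + k - 1) * ((m + 1) ^ 2 + (A * (m + 1) - B) * m)
      < (A + 1) * (m ^ 3 + 1) := by
    rcases eq_or_lt_of_le hk with h0 | h0
    · -- k = 0
      have hk0 : k = 0 := h0.symm
      subst hk0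
      nlinarith [mul_nonneg hA (by linarith : (0:ℤ) ≤ m + 1),
        mul_nonneg (mul_nonneg (by linarith : (0:ℤ) ≤ m - 1)
          (by linarith : (0:ℤ) ≤ B - 1)) (by linarith : (0:ℤ) ≤ m)]
    · rcases eq_or_lt_of_le (by omega : (1:ℤ) ≤ k) with h1 | h1
      · -- k = 1, so B ≥ A + 3
        have hk1 : k = 1 := h1.symm
        subst hk1
        have hB3 : A + 3 ≤ B := by
          have : A + 1 < B := by linarith
          omega
        nlinarith [mul_nonneg (by linarith : (0:ℤ) ≤ B - A - 3) (sq_nonneg m),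
          mul_nonneg (by linarith : (0:ℤ) ≤ m - 1) (by linarith : (0:ℤ) ≤ m)]
      · rcases eq_or_lt_of_le (by omega : (2:ℤ) ≤ k) with h2 | h2
        · -- k = 2, which forces A ≥ 1
          have hk2 : k = 2 := h2.symm
          subst hk2
          have hA1 : 1 ≤ A := by
            rcases eq_or_lt_of_le hA with hA0 | hA0
            · exfalso; nlinarith
            · omega
          nlinarith [mul_nonneg (mul_nonneg (by linarith : (0:ℤ) ≤ m + 1)
              (by linarith : (0:ℤ) ≤ B - 2*A - 3)) (by linarith : (0:ℤ) ≤ m),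
            mul_pos (by linarith : (0:ℤ) < m + 1) (by linarith : (0:ℤ) < A)]
        · -- k ≥ 3
          have h3 : 3 ≤ k := h2
          have hBk : k * (A + 1) + 1 ≤ B := by omega
          nlinarith [mul_nonneg (mul_nonneg (by linarith : (0:ℤ) ≤ m + k - 1)
              (by linarith : (0:ℤ) ≤ m)) (by linarith : (0:ℤ) ≤ B - 1 - k * (A + 1)),
            mul_nonneg (mul_nonneg (by linarith : (0:ℤ) ≤ k - 2)
              (by linarith : (0:ℤ) ≤ m)) (by nlinarith : (0:ℤ) ≤ k * (A + 1) - 1),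
            mul_nonneg hA (by linarith : (0:ℤ) ≤ m + 1),
            mul_nonneg (by linarith : (0:ℤ) ≤ m - 1) (by linarith : (0:ℤ) ≤ k - 2)]
  have h1 : (A + 1) * (m ^ 3 + 1)
      ≤ d * (A + 1) * ((m + 1) ^ 2 + (A * (m + 1) - B) * m) := by
    have := mul_le_mul_of_nonneg_left hcount (by linarith : (0:ℤ) ≤ A + 1)
    nlinarith [this]
  have h2 := lt_of_mul_lt_mul_right (lt_of_lt_of_le hD h1) (le_of_lt hN)
  linarith

/-- Arithmetic form of Lemma 2.1: with `N_Y = (m + 1)² + (A(m + 1) − B)·m`,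
if `m³ + 1 ≤ d·N_Y` then `d(A + 1) ≥ m + k`; in particular `d(A + 1) ≥ m + 1`
when `B > A + 2`. -/
theorem lemma_cov (m A B k d : ℤ) (hm : 2 ≤ m) (hA : 0 ≤ A)
    (hB1 : 1 ≤ B) (hB2 : B ≤ m + 1) (hgenus : -2 ≤ A * (m + 1) - B)
    (hk : 0 ≤ k) (hkB : k * (A + 1) < B) (hBA : B ≠ A + 2) (hd : 1 ≤ d)
    (hcount : m ^ 3 + 1 ≤ d * ((m + 1) ^ 2 + (A * (m + 1) - B) * m)) :
    m + k ≤ d * (A + 1) ∧ (A + 2 < B → m + 1 ≤ d * (A + 1)) := by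
  refine ⟨key_cov m A B k d hm hA hB1 hB2 hgenus hk hkB hBA hd hcount, fun hB => ?_⟩
  exact key_cov m A B 1 d hm hA hB1 hB2 hgenus (by norm_num)
    (by linarith) hBA hd hcount
end

section
/- Let m, A, B, k, d, u, v be integers with m ≥ 2, A ≥ 1, k ≥ 1, k(A + 1) < B ≤ m + 1, B > A + 2, u ≥ 0, v ≥ 0, and d = 1 + u + v. Set N_Y = (m + 1)² + (A(m + 1) − B)·m and suppose m³ + 1 ≤ d·N_Y. Set R = (m − 2)(m + 1) − d·(A(m + 1) − B) and suppose v(m + 1) ≤ R ≤ v(m + 1) + 3u + v. Then dB ≥ (k + 1)(m + 1). -/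
/-- Arithmetic form of Proposition 5.1: the new lower bound `dB ≥ (k + 1)(m + 1)`
for the degree `d` of a Galois covering of a maximal curve by the Hermitian curve,
where `R = (m − 2)(m + 1) − d(A(m + 1) − B)` is the degree of the ramification
divisor and `d = 1 + u + v` with `v(m + 1) ≤ R ≤ v(m + 1) + 3u + v`. -/
theorem prop_lower_bound (m A B k d u v : ℤ) (hm : 2 ≤ m) (hA : 1 ≤ A) (hk : 1 ≤ k)
    (hkB : k * (A + 1) < B) (hB : B ≤ m + 1) (hBA : A + 2 < B)
    (hu : 0 ≤ u) (hv : 0 ≤ v) (hd : d = 1 + u + v)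
    (hcount : m ^ 3 + 1 ≤ d * ((m + 1) ^ 2 + (A * (m + 1) - B) * m))
    (hR1 : v * (m + 1) ≤ (m - 2) * (m + 1) - d * (A * (m + 1) - B))
    (hR2 : (m - 2) * (m + 1) - d * (A * (m + 1) - B) ≤ v * (m + 1) + 3 * u + v) :
    (k + 1) * (m + 1) ≤ d * B := by
  by_contra h
  push_neg at h
  have hd0 : (0:ℤ) ≤ d := by linarith
  -- 2k ≤ m, hence 0 ≤ m + 1 - k
  have h2k : 2 * k ≤ m := by
    nlinarith [mul_le_mul_of_nonneg_left (show (2:ℤ) ≤ A + 1 by linarith)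
      (show (0:ℤ) ≤ k by linarith)]
  have hmk : (0:ℤ) ≤ m + 1 - k := by linarith
  -- From the negated goal and hR1: d*A + v ≤ m + k - 2
  have h1 : (d * A + v - m + 2) * (m + 1) < (k + 1) * (m + 1) := by nlinarith [hR1, h]
  have h2 : d * A + v - m + 2 < k + 1 :=
    lt_of_mul_lt_mul_right h1 (by linarith : (0:ℤ) ≤ m + 1)
  have hx : d * A ≤ m + k - 2 - v := by linarith
  rcases lt_or_ge k 2 with hk1 | hk2
  · -- k = 1 case: use B ≥ A + 3
    have hk1' : k = 1 := le_antisymm (by linarith) hk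
    subst hk1'
    have hdb : d * (A + 3) ≤ d * B := by
      apply mul_le_mul_of_nonneg_left (by linarith) hd0
    have hxm : d * A * m ≤ (m - 1 - v) * m := by
      apply mul_le_mul_of_nonneg_right (by linarith) (by linarith)
    nlinarith [hR2, hdb, hxm, hd, hv]
  · -- k ≥ 2 case: use B ≥ k(A+1) + 1
    have hdb : d * (k * (A + 1) + 1) ≤ d * B := by
      apply mul_le_mul_of_nonneg_left (by linarith) hd0
    have hxm : d * A * (m + 1 - k) ≤ (m + k - 2 - v) * (m + 1 - k) :=
      mul_le_mul_of_nonneg_right hx hmk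
    have hprod : 0 ≤ (k - 2) * (d - v - 1) :=
      mul_nonneg (by linarith) (by linarith)
    nlinarith [hR2, hdb, hxm, hprod, sq_nonneg (k - 1)]
end

section
/- Let q be a prime power and let F be a finite field with q² elements. Then the number of pairs (x, y) ∈ F × F satisfying x^q + x = y^{q+1} is exactly q³. -/
open Finset Polynomial

/-- Fiber count for the additive map `x ↦ x^q + x` over any `c` with `c^q = c`. -/
lemma hermitian_fiber_card {F : Type*} [Field F] [Fintype F] [DecidableEq F]
    (q : ℕ) (hq2 : 2 ≤ q)
    (hadd : ∀ a b : F, (a + b) ^ q = a ^ q + b ^ q)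
    (hF : Fintype.card F = q ^ 2)
    (c : F) (hc : c ^ q = c) :
    (univ.filter (fun x : F => x ^ q + x = c)).card = q := by
  have hq0 : 0 < q := by omega
  have hq1 : 0 < q - 1 := by omega
  have hsub : ∀ a b : F, (a - b) ^ q = a ^ q - b ^ q := by
    intro a b
    have := hadd (a - b) b
    rw [sub_add_cancel] at this
    rw [eq_sub_iff_add_eq, ← this]
  -- every element to the `q^2` is itself
  have hpow : ∀ x : F, (x ^ q) ^ q = x := by
    intro x
    rw [← pow_mul, ← sq, ← hF, FiniteField.pow_card]
  set T : F → F := fun x => x ^ q + x with hT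
  set Timg : Finset F := univ.image T with hTimg
  set K : ℕ := (univ.filter fun x : F => T x = 0).card with hK
  -- all fibers over the image have the same size K
  have claim1 : ∀ d ∈ Timg, (univ.filter fun x : F => T x = d).card = K := by
    intro d hd
    obtain ⟨x₀, -, hx₀⟩ := Finset.mem_image.mp hd
    subst hx₀
    rw [hK]
    apply Finset.card_bij' (fun x _ => x - x₀) (fun x _ => x + x₀)
    · intro a ha
      simp only [mem_filter, mem_univ, true_and, hT] at ha ⊢
      rw [hsub]
      linear_combination ha
    · intro a ha
      simp only [mem_filter, mem_univ, true_and, hT] at ha ⊢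
      rw [hadd]
      linear_combination ha
    · intro a _; ring
    · intro a _; ring
  -- the fibers partition F
  have claim2 : Timg.card * K = q ^ 2 := by
    have h1 : (univ : Finset F).card = ∑ d ∈ Timg, (univ.filter fun x => T x = d).card :=
      Finset.card_eq_sum_card_fiberwise (fun x _ => Finset.mem_image_of_mem T (mem_univ x))
    rw [Finset.sum_congr rfl claim1, Finset.sum_const, smul_eq_mul] at h1
    rw [← h1, Finset.card_univ, hF]
  -- bounding a set of "roots" by q
  have bound : ∀ (a : F) (s : Finset F),
      (∀ x ∈ s, x = 0 ∨ x ^ (q - 1) = a) → s.card ≤ q := by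
    intro a s hs
    have hsub : s ⊆ insert (0 : F) (nthRoots (q - 1) a).toFinset := by
      intro x hx
      rcases hs x hx with h | h
      · simp [h]
      · exact Finset.mem_insert_of_mem (by
          rw [Multiset.mem_toFinset, mem_nthRoots hq1]; exact h)
    calc s.card ≤ _ := Finset.card_le_card hsub
      _ ≤ (nthRoots (q - 1) a).toFinset.card + 1 := Finset.card_insert_le _ _
      _ ≤ Multiset.card (nthRoots (q - 1) a) + 1 :=
          Nat.add_le_add_right (Multiset.toFinset_card_le _) 1
      _ ≤ (q - 1) + 1 := Nat.add_le_add_right (card_nthRoots _ _) 1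
      _ = q := by omega
  have hKle : K ≤ q := by
    apply bound (-1)
    intro x hx
    simp only [mem_filter, mem_univ, true_and, hT] at hx
    rcases eq_or_ne x 0 with h | h
    · exact Or.inl h
    · right
      have hx' : x ^ (q - 1) * x = -1 * x := by
        rw [← pow_succ, show q - 1 + 1 = q by omega, neg_one_mul]
        linear_combination hx
      exact mul_right_cancel₀ h hx'
  -- image is contained in the fixed set of the q-power map
  have hTfix : ∀ x : F, (T x) ^ q = T x := by
    intro x
    simp only [hT]
    rw [hadd, hpow, add_comm]
  have hfixle : (univ.filter fun d : F => d ^ q = d).card ≤ q := by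
    apply bound 1
    intro x hx
    simp only [mem_filter, mem_univ, true_and] at hx
    rcases eq_or_ne x 0 with h | h
    · exact Or.inl h
    · right
      have hx' : x ^ (q - 1) * x = 1 * x := by
        rw [← pow_succ]
        have : q - 1 + 1 = q := by omega
        rw [this, one_mul, hx]
      exact mul_right_cancel₀ h hx'
  have hTsub : Timg ⊆ univ.filter fun d : F => d ^ q = d := by
    intro d hd
    obtain ⟨x, -, hx⟩ := Finset.mem_image.mp hd
    simp only [mem_filter, mem_univ, true_and]
    rw [← hx]; exact hTfix x
  have hTimgle : Timg.card ≤ q := le_trans (Finset.card_le_card hTsub) hfixle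
  -- conclude both cardinalities equal q
  have hKq : K = q := by
    refine le_antisymm hKle (Nat.le_of_mul_le_mul_left ?_ hq0)
    calc q * q = q ^ 2 := (sq q).symm
      _ = Timg.card * K := claim2.symm
      _ ≤ q * K := Nat.mul_le_mul_right K hTimgle
  have hTq : Timg.card = q := by
    refine le_antisymm hTimgle (Nat.le_of_mul_le_mul_right ?_ hq0)
    calc q * q = q ^ 2 := (sq q).symm
      _ = Timg.card * K := claim2.symm
      _ ≤ Timg.card * q := Nat.mul_le_mul_left _ hKle
  -- the image equals the fixed set, so c is in the image
  have heq : Timg = univ.filter fun d : F => d ^ q = d :=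
    Finset.eq_of_subset_of_card_le hTsub (by rw [hTq]; exact hfixle)
  have hcmem : c ∈ Timg := by
    rw [heq]; simp [hc]
  rw [claim1 c hcmem, hKq]

/-- The Hermitian curve `x^q + x = y^{q+1}` has exactly `q³` affine points over `F_{q²}`. -/
theorem hermitian_affine_point_count (q : ℕ) (hq : IsPrimePow q)
    (F : Type*) [Field F] [Fintype F] (hF : Fintype.card F = q ^ 2) :
    Nat.card {p : F × F // p.1 ^ q + p.1 = p.2 ^ (q + 1)} = q ^ 3 := by
  classical
  obtain ⟨p, n, hp, hn, rfl⟩ := hq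
  have hp' : p.Prime := hp.nat_prime
  haveI : Fact p.Prime := ⟨hp'⟩
  set q := p ^ n with hqdef
  have hq2 : 2 ≤ q := IsPrimePow.two_le ⟨p, n, hp, hn, rfl⟩
  -- characteristic of F is p
  have hchar : CharP F p := by
    set r := ringChar F with hr
    haveI : CharP F r := ringChar.charP F
    obtain ⟨m, hrp, hcard⟩ := FiniteField.card F r
    have : r ∣ p ^ (2 * n) := by
      rw [← pow_mul, mul_comm n 2] at hF
      rw [← hF, hcard]
      exact dvd_pow_self r (by positivity)
    have : r = p := by
      have := hrp.dvd_of_dvd_pow this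
      exact (Nat.prime_dvd_prime_iff_eq hrp hp').mp this
    rwa [← this]
  haveI := hchar
  have hadd : ∀ a b : F, (a + b) ^ q = a ^ q + b ^ q := fun a b =>
    add_pow_char_pow a b p n
  -- reorganize pair count as a sum over y of fiber counts
  have e : {pr : F × F // pr.1 ^ q + pr.1 = pr.2 ^ (q + 1)} ≃
      (Σ y : F, {x : F // x ^ q + x = y ^ (q + 1)}) :=
    { toFun := fun s => ⟨s.1.2, s.1.1, s.2⟩
      invFun := fun s => ⟨(s.2.1, s.1), s.2.2⟩
      left_inv := fun s => rfl
      right_inv := fun s => rfl }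
  rw [Nat.card_congr e, Nat.card_eq_fintype_card, Fintype.card_sigma]
  have key : ∀ y : F, Fintype.card {x : F // x ^ q + x = y ^ (q + 1)} = q := by
    intro y
    rw [Fintype.card_subtype]
    apply hermitian_fiber_card q hq2 hadd hF
    -- (y^(q+1))^q = y^(q+1)
    rw [← pow_mul]
    have hyq : y ^ (q ^ 2) = y := by rw [← hF, FiniteField.pow_card]
    calc y ^ ((q + 1) * q) = y ^ (q ^ 2) * y ^ q := by ring
      _ = y * y ^ q := by rw [hyq]
      _ = y ^ (q + 1) := by ring
  simp only [key, Finset.sum_const, Finset.card_univ, hF, smul_eq_mul]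
  ring
end

section
/- Let m, A, k be integers with m ≥ 2, A ≥ 0, and either k = 0, or both k ≥ 2 and A ≥ 1. Then (m³ + 1)(A + 1) > ((m + 1)² + (A(m + 1) − k(A + 1) − 1)·m)·(m − 1 + k). -/
/-- Key inequality in the proof of Lemma 2.1 for the case `B = k(A + 1) + 1`:
`(m³ + 1)(A + 1) > N_Y·(m − 1 + k)` where
`N_Y = (m + 1)² + (A(m + 1) − (k(A + 1) + 1))·m`, valid for `k = 0` and for
`k ≥ 2` (with `A ≥ 1`). -/
theorem lemma_cov_key_ineq (m A k : ℤ) (hm : 2 ≤ m) (hA : 0 ≤ A)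
    (hk : k = 0 ∨ (2 ≤ k ∧ 1 ≤ A)) :
    ((m + 1) ^ 2 + (A * (m + 1) - (k * (A + 1) + 1)) * m) * (m - 1 + k)
      < (m ^ 3 + 1) * (A + 1) := by
  rcases hk with rfl | ⟨hk2, hA1⟩
  · nlinarith [sq_nonneg m, mul_nonneg hA (by linarith : (0:ℤ) ≤ m - 1)]
  · nlinarith [mul_nonneg (mul_nonneg hA (by linarith : (0:ℤ) ≤ k - 1))
      (mul_nonneg (by linarith : (0:ℤ) ≤ k-1) (by linarith : (0:ℤ) ≤ m)), mul_nonneg (by linarith : (0:ℤ) ≤ k - 2)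
      (by nlinarith : (0:ℤ) ≤ k*m - 1), mul_pos (by linarith : (0:ℤ) < A)
      (by linarith : (0:ℤ) < m)]
end
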